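/- Let d and p be positive integers with p ≥ 2, and let β₁, …, β_p ∈ [0, d/2). Then the Lebesgue integral over the configuration space Conf_p (the set of p-tuples of pairwise distinct points of ℝ^d) of the function (x₁, …, x_p) ↦ ∏_{i=1}^p ⟨x_i⟩^{-(d+1)} · ∏_{i=1}^p ( min_{j ≠ i} |x_i − x_j| )^{-β_i} is finite. -/

import Mathlib

open MeasureTheory

/-- The "inhomogeneous norm" (Japanese bracket) `⟨y⟩ = (1 + |y|²)^{1/2}`. -/
noncomputable def jb {n : ℕ} (y : EuclideanSpace ℝ (Fin n)) : ℝ :=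
  (1 + ‖y‖ ^ 2) ^ ((1 : ℝ) / 2)

/-- The nearest-neighbor distance `min_{j ≠ i} |x_i − x_j|` (as the infimum of the
nonempty finite set of distances to the other points). -/
noncomputable def nnd {d p : ℕ} (x : Fin p → EuclideanSpace ℝ (Fin d)) (i : Fin p) : ℝ :=
  sInf {r : ℝ | ∃ j : Fin p, j ≠ i ∧ r = ‖x i - x j‖}

namespace StmtAux

open Metric Finset Function Set Real
open scoped ENNReal

noncomputable def WW (d : ℕ) (y : EuclideanSpace ℝ (Fin d)) : ℝ≥0∞ :=
  ENNReal.ofReal (jb y ^ (-((d : ℝ) + 1)))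

variable {d p : ℕ}

lemma measurable_WW : Measurable (WW d) := by
  unfold WW jb
  fun_prop

lemma WW_le_one (y : EuclideanSpace ℝ (Fin d)) : WW d y ≤ 1 := by
  unfold WW jb
  rw [show (1 : ℝ≥0∞) = ENNReal.ofReal 1 by simp]
  apply ENNReal.ofReal_le_ofReal
  apply Real.rpow_le_one_of_one_le_of_nonpos
  · apply Real.one_le_rpow (by nlinarith [sq_nonneg ‖y‖]) (by norm_num)
  · have : (0:ℝ) ≤ d := Nat.cast_nonneg d
    linarith

lemma lintegral_WW_lt_top : (∫⁻ y : EuclideanSpace ℝ (Fin d), WW d y) < ⊤ := by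
  have hb : ∀ y : EuclideanSpace ℝ (Fin d),
      WW d y ≤ ENNReal.ofReal ((2:ℝ) ^ (((d:ℝ)+1) / 2)) *
        ENNReal.ofReal ((1 + ‖y‖) ^ (-((d:ℝ)+1))) := by
    intro y
    rw [← ENNReal.ofReal_mul (by positivity)]
    apply ENNReal.ofReal_le_ofReal
    have h1 : jb y ^ (-((d : ℝ) + 1)) = (1 + ‖y‖^2) ^ (-((d:ℝ)+1) / 2) := by
      unfold jb
      rw [← Real.rpow_mul (by positivity)]
      ring_nf
    rw [h1]
    exact rpow_neg_one_add_norm_sq_le y (by positivity)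
  calc (∫⁻ y : EuclideanSpace ℝ (Fin d), WW d y)
      ≤ ∫⁻ y : EuclideanSpace ℝ (Fin d), ENNReal.ofReal ((2:ℝ) ^ (((d:ℝ)+1) / 2)) *
        ENNReal.ofReal ((1 + ‖y‖) ^ (-((d:ℝ)+1))) := lintegral_mono hb
    _ = ENNReal.ofReal ((2:ℝ) ^ (((d:ℝ)+1) / 2)) *
        ∫⁻ y : EuclideanSpace ℝ (Fin d), ENNReal.ofReal ((1 + ‖y‖) ^ (-((d:ℝ)+1))) := by
        rw [lintegral_const_mul' _ _ ENNReal.ofReal_ne_top]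
    _ < ⊤ := by
        apply ENNReal.mul_lt_top ENNReal.ofReal_lt_top
        apply finite_integral_one_add_norm
        rw [finrank_euclideanSpace_fin]
        linarith


lemma ball_int (hd : 0 < d) {γ : ℝ} (h0 : 0 ≤ γ) (hγ : γ < d) :
    (∫⁻ y : EuclideanSpace ℝ (Fin d) in ball 0 1, ENNReal.ofReal (‖y‖ ^ (-γ))) < ⊤ := by
  rcases eq_or_lt_of_le h0 with rfl | hγ0
  · simp only [neg_zero, Real.rpow_zero]
    simp [lt_of_le_of_lt (measure_mono (ball_subset_closedBall)) measure_closedBall_lt_top]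
  set μ := (volume : Measure (EuclideanSpace ℝ (Fin d))).restrict (ball 0 1)
  have hnn : 0 ≤ᵐ[μ] fun y : EuclideanSpace ℝ (Fin d) => ‖y‖ ^ (-γ) :=
    Filter.Eventually.of_forall fun y => by positivity
  have hm : AEMeasurable (fun y : EuclideanSpace ℝ (Fin d) => ‖y‖ ^ (-γ)) μ := by fun_prop
  rw [lintegral_eq_lintegral_meas_le μ hnn hm]
  have hsub : ∀ t : ℝ, 1 < t →
      {a : EuclideanSpace ℝ (Fin d) | t ≤ ‖a‖ ^ (-γ)} ⊆ closedBall 0 (t ^ (-γ⁻¹)) := by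
    intro t ht a ha
    simp only [mem_setOf_eq] at ha
    have ha0 : a ≠ 0 := by
      rintro rfl
      simp only [norm_zero] at ha
      rw [Real.zero_rpow (neg_ne_zero.mpr (ne_of_gt hγ0))] at ha
      linarith
    have hna : 0 < ‖a‖ := norm_pos_iff.mpr ha0
    rw [mem_closedBall_zero_iff]
    have := Real.rpow_le_rpow_of_nonpos (z := -γ⁻¹) (lt_trans one_pos ht) ha
      (by rw [neg_nonpos]; positivity)
    calc ‖a‖ = (‖a‖ ^ (-γ)) ^ (-γ⁻¹) := by
          rw [← Real.rpow_mul hna.le, neg_mul_neg, mul_inv_cancel₀ (ne_of_gt hγ0),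
            Real.rpow_one]
      _ ≤ t ^ (-γ⁻¹) := this
  have hC : μ (Set.univ) < ⊤ := by
    rw [Measure.restrict_apply_univ]
    exact lt_of_le_of_lt (measure_mono ball_subset_closedBall) measure_closedBall_lt_top
  calc ∫⁻ t in Ioi (0:ℝ), μ {a | t ≤ ‖a‖ ^ (-γ)}
      ≤ ∫⁻ t in Ioc (0:ℝ) 1 ∪ Ioi 1, μ {a | t ≤ ‖a‖ ^ (-γ)} :=
        lintegral_mono_set Ioi_subset_Ioc_union_Ioi
    _ ≤ (∫⁻ t in Ioc (0:ℝ) 1, μ {a | t ≤ ‖a‖ ^ (-γ)}) +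
        ∫⁻ t in Ioi (1:ℝ), μ {a | t ≤ ‖a‖ ^ (-γ)} := lintegral_union_le _ _ _
    _ < ⊤ := by
        apply ENNReal.add_lt_top.2
        constructor
        · calc (∫⁻ t in Ioc (0:ℝ) 1, μ {a | t ≤ ‖a‖ ^ (-γ)})
              ≤ ∫⁻ _ in Ioc (0:ℝ) 1, μ Set.univ := by
                apply lintegral_mono fun t => measure_mono (subset_univ _)
            _ = μ Set.univ * volume (Ioc (0:ℝ) 1) := setLIntegral_const _ _
            _ < ⊤ := by
                apply ENNReal.mul_lt_top hC
                simp [Real.volume_Ioc]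
        · have hb : ∀ t ∈ Ioi (1:ℝ), μ {a | t ≤ ‖a‖ ^ (-γ)} ≤
              ENNReal.ofReal (t ^ (-(γ⁻¹ * d))) *
                volume (ball (0 : EuclideanSpace ℝ (Fin d)) 1) := by
            intro t ht
            calc μ {a | t ≤ ‖a‖ ^ (-γ)}
                ≤ volume (closedBall (0 : EuclideanSpace ℝ (Fin d)) (t ^ (-γ⁻¹))) :=
                  le_trans (le_trans (Measure.restrict_le_self _)
                    (measure_mono (hsub t ht))) le_rfl
              _ = ENNReal.ofReal ((t ^ (-γ⁻¹)) ^ d) *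
                  volume (ball (0 : EuclideanSpace ℝ (Fin d)) 1) := by
                  rw [Measure.addHaar_closedBall _ _
                    (Real.rpow_nonneg (le_of_lt (lt_trans one_pos ht)) _)]
                  rw [finrank_euclideanSpace_fin]
              _ = ENNReal.ofReal (t ^ (-(γ⁻¹ * d))) *
                  volume (ball (0 : EuclideanSpace ℝ (Fin d)) 1) := by
                  congr 1
                  rw [← Real.rpow_natCast (t ^ (-γ⁻¹)) d, ← Real.rpow_mul
                    (le_of_lt (lt_trans one_pos ht)), neg_mul]
          calc ∫⁻ t in Ioi (1:ℝ), μ {a | t ≤ ‖a‖ ^ (-γ)}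
              ≤ ∫⁻ t in Ioi (1:ℝ), ENNReal.ofReal (t ^ (-(γ⁻¹ * d))) *
                  volume (ball (0 : EuclideanSpace ℝ (Fin d)) 1) :=
                setLIntegral_mono' measurableSet_Ioi hb
            _ = (∫⁻ t in Ioi (1:ℝ), ENNReal.ofReal (t ^ (-(γ⁻¹ * d)))) *
                  volume (ball (0 : EuclideanSpace ℝ (Fin d)) 1) :=
                lintegral_mul_const' _ _ measure_ball_lt_top.ne
            _ < ⊤ := by
                apply ENNReal.mul_lt_top _ measure_ball_lt_top
                apply IntegrableOn.setLIntegral_lt_top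
                apply integrableOn_Ioi_rpow_of_lt _ one_pos
                have h1 : (1:ℝ) < γ⁻¹ * d := by
                  rw [lt_inv_mul_iff₀ hγ0]
                  simpa using hγ
                linarith

lemma K2 (hd : 0 < d) {γ : ℝ} (h0 : 0 ≤ γ) (hγ : γ < d) :
    ∃ C : ℝ≥0∞, C ≠ ⊤ ∧ ∀ a : EuclideanSpace ℝ (Fin d),
      (∫⁻ y : EuclideanSpace ℝ (Fin d), WW d y * ENNReal.ofReal (‖y - a‖ ^ (-γ))) ≤ C := by
  refine ⟨(∫⁻ y : EuclideanSpace ℝ (Fin d) in ball 0 1, ENNReal.ofReal (‖y‖ ^ (-γ))) +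
    ∫⁻ y : EuclideanSpace ℝ (Fin d), WW d y, ?_, ?_⟩
  · exact (ENNReal.add_lt_top.2 ⟨ball_int hd h0 hγ, lintegral_WW_lt_top⟩).ne
  intro a
  set g : EuclideanSpace ℝ (Fin d) → ℝ≥0∞ :=
    (ball (0 : EuclideanSpace ℝ (Fin d)) 1).indicator fun z => ENNReal.ofReal (‖z‖ ^ (-γ))
  have hgm : Measurable g := by
    apply Measurable.indicator _ measurableSet_ball
    fun_prop
  have hpt : ∀ y : EuclideanSpace ℝ (Fin d),
      WW d y * ENNReal.ofReal (‖y - a‖ ^ (-γ)) ≤ g (y - a) + WW d y := by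
    intro y
    by_cases h : ‖y - a‖ < 1
    · have : g (y - a) = ENNReal.ofReal (‖y - a‖ ^ (-γ)) :=
        indicator_of_mem (by rwa [mem_ball_zero_iff]) _
      rw [this]
      calc WW d y * ENNReal.ofReal (‖y - a‖ ^ (-γ))
          ≤ 1 * ENNReal.ofReal (‖y - a‖ ^ (-γ)) := mul_le_mul_left (WW_le_one y) _
        _ = ENNReal.ofReal (‖y - a‖ ^ (-γ)) := one_mul _
        _ ≤ _ := le_add_right le_rfl
    · calc WW d y * ENNReal.ofReal (‖y - a‖ ^ (-γ))
          ≤ WW d y * 1 := by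
            apply mul_le_mul_right
            exact ENNReal.ofReal_le_one.mpr
              (Real.rpow_le_one_of_one_le_of_nonpos (not_lt.1 h) (neg_nonpos.2 h0))
        _ = WW d y := mul_one _
        _ ≤ _ := le_add_left le_rfl
  calc (∫⁻ y : EuclideanSpace ℝ (Fin d), WW d y * ENNReal.ofReal (‖y - a‖ ^ (-γ)))
      ≤ ∫⁻ y : EuclideanSpace ℝ (Fin d), (g (y - a) + WW d y) := lintegral_mono hpt
    _ = (∫⁻ y : EuclideanSpace ℝ (Fin d), g (y - a)) +
        ∫⁻ y : EuclideanSpace ℝ (Fin d), WW d y :=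
      lintegral_add_left (hgm.comp (measurable_id.sub measurable_const)) _
    _ = (∫⁻ z : EuclideanSpace ℝ (Fin d), g z) +
        ∫⁻ y : EuclideanSpace ℝ (Fin d), WW d y := by
      congr 1
      exact (measurePreserving_sub_right volume a).lintegral_comp hgm
    _ = (∫⁻ y : EuclideanSpace ℝ (Fin d) in ball 0 1, ENNReal.ofReal (‖y‖ ^ (-γ))) +
        ∫⁻ y : EuclideanSpace ℝ (Fin d), WW d y := by
      congr 1
      exact lintegral_indicator measurableSet_ball _

noncomputable def FF (d : ℕ) {p : ℕ} (s B : Finset (Fin p)) (σ : Fin p → Fin p)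
    (γ : Fin p → ℝ) (x : Fin p → EuclideanSpace ℝ (Fin d)) : ℝ≥0∞ :=
  (∏ k ∈ s, WW d (x k)) * ∏ i ∈ B, ENNReal.ofReal (‖x i - x (σ i)‖ ^ (-(γ i)))

lemma measurable_FF {s B : Finset (Fin p)} {σ : Fin p → Fin p} {γ : Fin p → ℝ} :
    Measurable (FF d s B σ γ) := by
  apply Measurable.mul
  · apply Finset.measurable_prod
    intro k _
    exact measurable_WW.comp (measurable_pi_apply k)
  · apply Finset.measurable_prod
    intro i _
    fun_prop

lemma FF_ne_top {s B : Finset (Fin p)} {σ : Fin p → Fin p} {γ : Fin p → ℝ}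
    (x : Fin p → EuclideanSpace ℝ (Fin d)) : FF d s B σ γ x ≠ ⊤ := by
  apply ENNReal.mul_ne_top
  · exact (ENNReal.prod_lt_top (fun k _ => ENNReal.ofReal_lt_top)).ne
  · exact (ENNReal.prod_lt_top (fun k _ => ENNReal.ofReal_lt_top)).ne

lemma forest (hd : 0 < d) (σ : Fin p → Fin p) (γ : Fin p → ℝ)
    (C : Fin p → ℝ≥0∞) (hCt : ∀ i, C i ≠ ⊤)
    (hCb : ∀ (i : Fin p) (a : EuclideanSpace ℝ (Fin d)),
      (∫⁻ y : EuclideanSpace ℝ (Fin d), WW d y * ENNReal.ofReal (‖y - a‖ ^ (-(γ i)))) ≤ C i) :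
    ∀ (n : ℕ) (s B : Finset (Fin p)), s.card = n → B ⊆ s →
      ((∀ i ∈ B, σ i < i) ∨ (∀ i ∈ B, i < σ i)) →
      ∀ x : Fin p → EuclideanSpace ℝ (Fin d),
      (∫⋯∫⁻_s, FF d s B σ γ ∂fun _ => (volume : Measure (EuclideanSpace ℝ (Fin d)))) x
        ≤ (∏ i ∈ B, C i) * (∫⁻ y : EuclideanSpace ℝ (Fin d), WW d y) ^ (s.card - B.card) := by
  set L := (∫⁻ y : EuclideanSpace ℝ (Fin d), WW d y) with hL
  intro n
  induction n with
  | zero =>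
    intro s B hcard hBs _ x
    have hs : s = ∅ := Finset.card_eq_zero.mp hcard
    subst hs
    have hB : B = ∅ := Finset.subset_empty.mp hBs
    subst hB
    simp [FF]
  | succ n IH =>
    intro s B hcard hBs hmono x
    -- choose the coordinate to integrate out
    have hsne : s.Nonempty := Finset.card_pos.mp (by omega)
    obtain ⟨i₀, hi₀s, hi₀B⟩ :
        ∃ i₀, i₀ ∈ s ∧ (B = ∅ ∨ (i₀ ∈ B ∧ σ i₀ ≠ i₀ ∧ ∀ i ∈ B.erase i₀, σ i ≠ i₀)) := by
      rcases Finset.eq_empty_or_nonempty B with hB | hB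
      · exact ⟨hsne.choose, hsne.choose_spec, Or.inl hB⟩
      rcases hmono with hm | hm
      · refine ⟨B.max' hB, hBs (B.max'_mem hB), Or.inr ⟨B.max'_mem hB, ?_, ?_⟩⟩
        · exact ne_of_lt (hm _ (B.max'_mem hB))
        · intro i hi
          have h1 : σ i < i := hm i (Finset.mem_of_mem_erase hi)
          have h2 : i ≤ B.max' hB := B.le_max' i (Finset.mem_of_mem_erase hi)
          exact fun h => absurd (h ▸ lt_of_lt_of_le h1 h2) (lt_irrefl _)
      · refine ⟨B.min' hB, hBs (B.min'_mem hB), Or.inr ⟨B.min'_mem hB, ?_, ?_⟩⟩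
        · exact (ne_of_lt (hm _ (B.min'_mem hB))).symm
        · intro i hi
          have h1 : i < σ i := hm i (Finset.mem_of_mem_erase hi)
          have h2 : B.min' hB ≤ i := B.min'_le i (Finset.mem_of_mem_erase hi)
          exact fun h => absurd (h ▸ lt_of_le_of_lt h2 h1) (lt_irrefl _)
    have hLne : L ≠ ⊤ := lintegral_WW_lt_top.ne
    have hcards : (s.erase i₀).card = n := by
      rw [Finset.card_erase_of_mem hi₀s, hcard]
      omega
    rw [lmarginal_erase' _ measurable_FF hi₀s]
    rcases hi₀B with hBe | ⟨hi₀B, hσi₀, hBer⟩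
    · -- B = ∅
      subst hBe
      have key : ∀ z : Fin p → EuclideanSpace ℝ (Fin d),
          (∫⁻ y, FF d s ∅ σ γ (update z i₀ y)) = FF d (s.erase i₀) ∅ σ γ z * L := by
        intro z
        have h1 : ∀ y, FF d s ∅ σ γ (update z i₀ y) =
            FF d (s.erase i₀) ∅ σ γ z * WW d y := by
          intro y
          unfold FF
          rw [← Finset.mul_prod_erase s _ hi₀s, update_self,
            Finset.prod_congr rfl
              (fun k hk => by rw [update_of_ne (Finset.ne_of_mem_erase hk)])]
          ring
        simp_rw [h1]
        rw [lintegral_const_mul' _ _ (FF_ne_top _)]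
      have hfun : (fun z => ∫⁻ y, FF d s ∅ σ γ (update z i₀ y)) =
          fun z => FF d (s.erase i₀) ∅ σ γ z * L := funext key
      rw [hfun]
      have hpull : (∫⋯∫⁻_(s.erase i₀), (fun z => FF d (s.erase i₀) ∅ σ γ z * L)
            ∂fun _ => (volume : Measure (EuclideanSpace ℝ (Fin d)))) x =
          (∫⋯∫⁻_(s.erase i₀), FF d (s.erase i₀) ∅ σ γ
            ∂fun _ => (volume : Measure (EuclideanSpace ℝ (Fin d)))) x * L := by
        simp only [lmarginal]
        exact lintegral_mul_const' _ _ hLne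
      rw [hpull]
      calc (∫⋯∫⁻_(s.erase i₀), FF d (s.erase i₀) ∅ σ γ
            ∂fun _ => (volume : Measure (EuclideanSpace ℝ (Fin d)))) x * L
          ≤ ((∏ i ∈ (∅ : Finset (Fin p)), C i) * L ^ ((s.erase i₀).card - 0)) * L := by
            apply mul_le_mul_left
            exact IH (s.erase i₀) ∅ hcards (Finset.empty_subset _) (Or.inl (by simp)) x
        _ = (∏ i ∈ (∅ : Finset (Fin p)), C i) * L ^ (s.card - Finset.card ∅) := by
            rw [Finset.prod_empty, one_mul, one_mul, hcards, hcard]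
            simp [← pow_succ]
    · -- i₀ ∈ B
      have hBsub : B.erase i₀ ⊆ s.erase i₀ := Finset.erase_subset_erase _ hBs
      have key : ∀ z : Fin p → EuclideanSpace ℝ (Fin d),
          (∫⁻ y, FF d s B σ γ (update z i₀ y)) ≤
            FF d (s.erase i₀) (B.erase i₀) σ γ z * C i₀ := by
        intro z
        have h1 : ∀ y, FF d s B σ γ (update z i₀ y) =
            FF d (s.erase i₀) (B.erase i₀) σ γ z *
              (WW d y * ENNReal.ofReal (‖y - z (σ i₀)‖ ^ (-(γ i₀)))) := by
          intro y
          have hWprod : ∏ k ∈ s, WW d (update z i₀ y k) =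
              WW d y * ∏ k ∈ s.erase i₀, WW d (z k) := by
            rw [← Finset.mul_prod_erase s _ hi₀s, update_self]
            congr 1
            exact Finset.prod_congr rfl
              (fun k hk => by rw [update_of_ne (Finset.ne_of_mem_erase hk)])
          have hGprod : ∏ i ∈ B,
              ENNReal.ofReal (‖update z i₀ y i - update z i₀ y (σ i)‖ ^ (-(γ i))) =
              ENNReal.ofReal (‖y - z (σ i₀)‖ ^ (-(γ i₀))) *
                ∏ i ∈ B.erase i₀, ENNReal.ofReal (‖z i - z (σ i)‖ ^ (-(γ i))) := by
            rw [← Finset.mul_prod_erase B _ hi₀B, update_self, update_of_ne hσi₀]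
            congr 1
            exact Finset.prod_congr rfl (fun i hi => by
              rw [update_of_ne (Finset.ne_of_mem_erase hi), update_of_ne (hBer i hi)])
          unfold FF
          rw [hWprod, hGprod]
          ring
        calc (∫⁻ y, FF d s B σ γ (update z i₀ y))
            = FF d (s.erase i₀) (B.erase i₀) σ γ z *
              ∫⁻ y, WW d y * ENNReal.ofReal (‖y - z (σ i₀)‖ ^ (-(γ i₀))) := by
              simp_rw [h1]
              rw [lintegral_const_mul' _ _ (FF_ne_top _)]
          _ ≤ FF d (s.erase i₀) (B.erase i₀) σ γ z * C i₀ :=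
              mul_le_mul_right (hCb i₀ (z (σ i₀))) _
      have hmono' : (∀ i ∈ B.erase i₀, σ i < i) ∨ (∀ i ∈ B.erase i₀, i < σ i) := by
        rcases hmono with hm | hm
        · exact Or.inl fun i hi => hm i (Finset.mem_of_mem_erase hi)
        · exact Or.inr fun i hi => hm i (Finset.mem_of_mem_erase hi)
      calc (∫⋯∫⁻_(s.erase i₀), (fun z => ∫⁻ y, FF d s B σ γ (update z i₀ y))
            ∂fun _ => (volume : Measure (EuclideanSpace ℝ (Fin d)))) x
          ≤ (∫⋯∫⁻_(s.erase i₀), (fun z => FF d (s.erase i₀) (B.erase i₀) σ γ z * C i₀)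
            ∂fun _ => (volume : Measure (EuclideanSpace ℝ (Fin d)))) x :=
            lmarginal_mono key x
        _ = (∫⋯∫⁻_(s.erase i₀), FF d (s.erase i₀) (B.erase i₀) σ γ
            ∂fun _ => (volume : Measure (EuclideanSpace ℝ (Fin d)))) x * C i₀ := by
            simp only [lmarginal]
            exact lintegral_mul_const' _ _ (hCt i₀)
        _ ≤ ((∏ i ∈ B.erase i₀, C i) * L ^ ((s.erase i₀).card - (B.erase i₀).card)) * C i₀ :=
            mul_le_mul_left (IH (s.erase i₀) (B.erase i₀) hcards hBsub hmono' x) _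
        _ = (∏ i ∈ B, C i) * L ^ (s.card - B.card) := by
            rw [← Finset.mul_prod_erase B C hi₀B]
            have hBcard : 1 ≤ B.card := Finset.card_pos.mpr ⟨i₀, hi₀B⟩
            have hBle : B.card ≤ s.card := Finset.card_le_card hBs
            rw [Finset.card_erase_of_mem hi₀B, hcards, hcard]
            have : n - (B.card - 1) = n + 1 - B.card := by omega
            rw [this]
            ring

lemma nnd_nonneg (x : Fin p → EuclideanSpace ℝ (Fin d)) (i : Fin p) : 0 ≤ nnd x i := by
  apply Real.sInf_nonneg
  rintro r ⟨j, -, rfl⟩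
  positivity

lemma nnd_mem (hp : 2 ≤ p) (x : Fin p → EuclideanSpace ℝ (Fin d)) (i : Fin p) :
    ∃ j : Fin p, j ≠ i ∧ nnd x i = ‖x i - x j‖ := by
  have hnt : Nontrivial (Fin p) := Fin.nontrivial_iff_two_le.mpr hp
  set S : Set ℝ := {r : ℝ | ∃ j : Fin p, j ≠ i ∧ r = ‖x i - x j‖} with hS
  have hfin : S.Finite := by
    have : S = (fun j : Fin p => ‖x i - x j‖) '' {j | j ≠ i} := by
      ext r
      constructor
      · rintro ⟨j, hj, rfl⟩; exact ⟨j, hj, rfl⟩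
      · rintro ⟨j, hj, rfl⟩; exact ⟨j, hj, rfl⟩
    rw [this]
    exact (Set.toFinite _).image _
  have hne : S.Nonempty := by
    obtain ⟨j, hj⟩ := exists_ne i
    exact ⟨‖x i - x j‖, j, hj, rfl⟩
  have h := hne.csInf_mem hfin
  obtain ⟨j, hj, hEq⟩ := h
  exact ⟨j, hj, hEq⟩

lemma nnd_le_sum (hp : 2 ≤ p) (x : Fin p → EuclideanSpace ℝ (Fin d)) (i : Fin p) {b : ℝ} :
    ENNReal.ofReal (nnd x i ^ (-b)) ≤
      ∑ j ∈ Finset.univ.erase i, ENNReal.ofReal (‖x i - x j‖ ^ (-b)) := by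
  obtain ⟨j0, hj0, hEq⟩ := nnd_mem hp x i
  rw [hEq]
  exact Finset.single_le_sum (f := fun j => ENNReal.ofReal (‖x i - x j‖ ^ (-b)))
    (fun _ _ => zero_le) (Finset.mem_erase.mpr ⟨hj0, Finset.mem_univ _⟩)

lemma sq_bound {r b : ℝ} (hr : 0 ≤ r) (hb : 0 ≤ b) :
    ENNReal.ofReal (r ^ (-b)) ^ 2 ≤ ENNReal.ofReal (r ^ (-(2 * b))) := by
  rcases eq_or_lt_of_le hr with hr0 | hr0
  · rcases eq_or_lt_of_le hb with hb0 | hb0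
    · rw [← hb0, ← hr0]
      norm_num
    · rw [← hr0, Real.zero_rpow (by linarith), Real.zero_rpow (by linarith)]
      simp
  · apply le_of_eq
    rw [sq, ← ENNReal.ofReal_mul (Real.rpow_nonneg hr _), ← Real.rpow_add hr0]
    ring_nf
lemma amgm (a b : ℝ≥0∞) : a * b ≤ a ^ 2 + b ^ 2 := by
  rcases le_total a b with h | h
  · calc a * b ≤ b * b := mul_le_mul_left h b
      _ = b ^ 2 := (sq b).symm
      _ ≤ _ := le_add_left le_rfl
  · calc a * b ≤ a * a := mul_le_mul_right h a
      _ = a ^ 2 := (sq a).symm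
      _ ≤ _ := le_add_right le_rfl


end StmtAux

/-- For `p ≥ 2` and exponents `β₁, …, β_p ∈ [0, d/2)`, the Lebesgue integral over the
configuration space `Conf_p` (tuples of pairwise distinct points) of
`∏ᵢ ⟨xᵢ⟩^{-(d+1)} · ∏ᵢ (min_{j ≠ i} |xᵢ − xⱼ|)^{-βᵢ}` is finite. -/
theorem stmt8 (d p : ℕ) (hd : 0 < d) (hp : 2 ≤ p)
    (β : Fin p → ℝ) (hβ0 : ∀ i, 0 ≤ β i) (hβ : ∀ i, β i < (d : ℝ) / 2) :
    (∫⁻ x in {x : Fin p → EuclideanSpace ℝ (Fin d) | Function.Injective x},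
      ENNReal.ofReal
        ((∏ i, jb (x i) ^ (-((d : ℝ) + 1))) * ∏ i, nnd x i ^ (-(β i)))) < ⊤ := by
  classical
  open StmtAux Finset Function in
  set γ : Fin p → ℝ := fun i => 2 * β i with hγdef
  have hγ0 : ∀ i, 0 ≤ γ i := fun i => by
    have := hβ0 i; simp only [γ]; linarith
  have hγd : ∀ i, γ i < d := fun i => by
    have := hβ i; simp only [γ]; linarith
  choose C hCt hCb using fun i : Fin p => K2 hd (hγ0 i) (hγd i)
  set t : Fin p → Finset (Fin p) := fun i => Finset.univ.erase i with ht
  have hpt : ∀ x : Fin p → EuclideanSpace ℝ (Fin d),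
      ENNReal.ofReal
        ((∏ i, jb (x i) ^ (-((d : ℝ) + 1))) * ∏ i, nnd x i ^ (-(β i))) ≤
      ∑ σ ∈ Fintype.piFinset t,
        (FF d Finset.univ (Finset.univ.filter fun i => σ i < i) σ γ x +
         FF d Finset.univ (Finset.univ.filter fun i => ¬ σ i < i) σ γ x) := by
    intro x
    have hjb : ∀ i, (0:ℝ) ≤ jb (x i) ^ (-((d : ℝ) + 1)) := fun i =>
      Real.rpow_nonneg (by unfold jb; positivity) _
    rw [ENNReal.ofReal_mul (Finset.prod_nonneg fun i _ => hjb i),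
      ENNReal.ofReal_prod_of_nonneg (fun i _ => hjb i),
      ENNReal.ofReal_prod_of_nonneg
        (fun i _ => Real.rpow_nonneg (nnd_nonneg x i) _)]
    calc (∏ i, ENNReal.ofReal (jb (x i) ^ (-((d : ℝ) + 1)))) *
          ∏ i, ENNReal.ofReal (nnd x i ^ (-(β i)))
        ≤ (∏ i, ENNReal.ofReal (jb (x i) ^ (-((d : ℝ) + 1)))) *
          ∏ i, ∑ j ∈ Finset.univ.erase i, ENNReal.ofReal (‖x i - x j‖ ^ (-(β i))) :=
          mul_le_mul_right (Finset.prod_le_prod' fun i _ => nnd_le_sum hp x i) _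
      _ = (∏ i, ENNReal.ofReal (jb (x i) ^ (-((d : ℝ) + 1)))) *
          ∑ σ ∈ Fintype.piFinset t,
            ∏ i, ENNReal.ofReal (‖x i - x (σ i)‖ ^ (-(β i))) := by
          rw [Finset.prod_univ_sum]
      _ = ∑ σ ∈ Fintype.piFinset t,
            (∏ i, ENNReal.ofReal (jb (x i) ^ (-((d : ℝ) + 1)))) *
              ∏ i, ENNReal.ofReal (‖x i - x (σ i)‖ ^ (-(β i))) := Finset.mul_sum _ _ _
      _ ≤ _ := by
          apply Finset.sum_le_sum
          intro σ _
          have hsplit : ∏ i, ENNReal.ofReal (‖x i - x (σ i)‖ ^ (-(β i))) =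
              (∏ i ∈ Finset.univ.filter fun i => σ i < i,
                ENNReal.ofReal (‖x i - x (σ i)‖ ^ (-(β i)))) *
              ∏ i ∈ Finset.univ.filter fun i => ¬ σ i < i,
                ENNReal.ofReal (‖x i - x (σ i)‖ ^ (-(β i))) :=
            (Finset.prod_filter_mul_prod_filter_not Finset.univ _ _).symm
          have hB : ∀ B : Finset (Fin p),
              (∏ i ∈ B, ENNReal.ofReal (‖x i - x (σ i)‖ ^ (-(β i)))) ^ 2 ≤
              ∏ i ∈ B, ENNReal.ofReal (‖x i - x (σ i)‖ ^ (-(γ i))) := by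
            intro B
            rw [← Finset.prod_pow]
            exact Finset.prod_le_prod' fun i _ => sq_bound (norm_nonneg _) (hβ0 i)
          calc (∏ i, ENNReal.ofReal (jb (x i) ^ (-((d : ℝ) + 1)))) *
                ∏ i, ENNReal.ofReal (‖x i - x (σ i)‖ ^ (-(β i)))
              ≤ (∏ i, ENNReal.ofReal (jb (x i) ^ (-((d : ℝ) + 1)))) *
                (((∏ i ∈ Finset.univ.filter fun i => σ i < i,
                    ENNReal.ofReal (‖x i - x (σ i)‖ ^ (-(β i)))) ^ 2) +
                 ((∏ i ∈ Finset.univ.filter fun i => ¬ σ i < i,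
                    ENNReal.ofReal (‖x i - x (σ i)‖ ^ (-(β i)))) ^ 2)) := by
                rw [hsplit]
                exact mul_le_mul_right (amgm _ _) _
            _ ≤ (∏ i, ENNReal.ofReal (jb (x i) ^ (-((d : ℝ) + 1)))) *
                ((∏ i ∈ Finset.univ.filter fun i => σ i < i,
                    ENNReal.ofReal (‖x i - x (σ i)‖ ^ (-(γ i)))) +
                 (∏ i ∈ Finset.univ.filter fun i => ¬ σ i < i,
                    ENNReal.ofReal (‖x i - x (σ i)‖ ^ (-(γ i))))) :=
                mul_le_mul_right (add_le_add (hB _) (hB _)) _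
            _ = _ := by
                unfold FF WW
                rw [mul_add]
  refine lt_of_le_of_lt
    (le_trans (setLIntegral_le_lintegral _ _) (lintegral_mono hpt)) ?_
  rw [lintegral_finset_sum _ (f := fun σ x => FF d Finset.univ (Finset.univ.filter fun i => σ i < i) σ γ x + FF d Finset.univ (Finset.univ.filter fun i => ¬ σ i < i) σ γ x) (fun σ _ => measurable_FF.add measurable_FF)]
  rw [ENNReal.sum_lt_top]
  intro σ hσ
  have hσ' : ∀ i, σ i ≠ i := by
    intro i
    have := (Fintype.mem_piFinset.mp hσ) i
    rw [ht] at this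
    exact (Finset.mem_erase.mp this).1
  have key : ∀ B : Finset (Fin p),
      ((∀ i ∈ B, σ i < i) ∨ (∀ i ∈ B, i < σ i)) →
      (∫⁻ x : Fin p → EuclideanSpace ℝ (Fin d), FF d Finset.univ B σ γ x) < ⊤ := by
    intro B hB
    rw [MeasureTheory.volume_pi, lintegral_eq_lmarginal_univ (fun _ => 0)]
    refine lt_of_le_of_lt
      (forest hd σ γ C hCt hCb Finset.univ.card Finset.univ B rfl
        (Finset.subset_univ B) hB _) ?_
    exact ENNReal.mul_lt_top
      (ENNReal.prod_lt_top fun i _ => (hCt i).lt_top)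
      (ENNReal.pow_lt_top lintegral_WW_lt_top)
  rw [lintegral_add_left measurable_FF]
  refine ENNReal.add_lt_top.mpr ⟨?_, ?_⟩
  · exact key _ (Or.inl fun i hi => (Finset.mem_filter.mp hi).2)
  · exact key _ (Or.inr fun i hi =>
      lt_of_le_of_ne (not_lt.mp (Finset.mem_filter.mp hi).2) (hσ' i).symm)
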